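/- (Proposition 2.4, solution form.) Let p be an odd positive integer and q an even positive integer, let X, Y : ℝ × ℝ → ℝ be arbitrary functions, and define G(θ, ρ) = ρ · (ρ^q·cos θ·X(ρ^p cos θ, ρ^q sin θ) + ρ^p·sin θ·Y(ρ^p cos θ, ρ^q sin θ)) / (−q·ρ^q·sin θ·X(ρ^p cos θ, ρ^q sin θ) + p·ρ^p·cos θ·Y(ρ^p cos θ, ρ^q sin θ)) (division by zero taken as zero). Then G(π − θ, −ρ) = G(θ, ρ) for all θ, ρ; consequently, if r : ℝ → ℝ is differentiable on an interval I and satisfies r′(θ) = G(θ, r(θ)) on I, then s(θ) := −r(π − θ) satisfies s′(θ) = G(θ, s(θ)) for all θ with π − θ ∈ I. -/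

import Mathlib

open Real

/-- Proposition 2.4, solution form: with `p` odd and `q` even,
the generalized polar vector field satisfies `G(π − θ, −ρ) = G(θ, ρ)`;
consequently if `r` solves `r′ = G(θ, r)` on `I`, then `s(θ) := −r(π − θ)`
solves it at every `θ` with `π − θ ∈ I`. -/
theorem odd_even_symmetry (p q : ℕ) (hp : 0 < p) (hq : 0 < q)
    (hpodd : Odd p) (hqeven : Even q)
    (X Y : ℝ × ℝ → ℝ) (G : ℝ → ℝ → ℝ)
    (hG : ∀ θ ρ : ℝ, G θ ρ =
      ρ * (ρ ^ q * Real.cos θ * X (ρ ^ p * Real.cos θ, ρ ^ q * Real.sin θ) +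
           ρ ^ p * Real.sin θ * Y (ρ ^ p * Real.cos θ, ρ ^ q * Real.sin θ)) /
        (-(q : ℝ) * ρ ^ q * Real.sin θ * X (ρ ^ p * Real.cos θ, ρ ^ q * Real.sin θ) +
          (p : ℝ) * ρ ^ p * Real.cos θ * Y (ρ ^ p * Real.cos θ, ρ ^ q * Real.sin θ)))
    (I : Set ℝ) (r : ℝ → ℝ)
    (hr : ∀ θ ∈ I, HasDerivAt r (G θ (r θ)) θ) :
    (∀ θ ρ : ℝ, G (π - θ) (-ρ) = G θ ρ) ∧
    (∀ θ : ℝ, π - θ ∈ I →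
      HasDerivAt (fun t => -r (π - t)) (G θ (-r (π - θ))) θ) := by
  have key : ∀ θ ρ : ℝ, G (π - θ) (-ρ) = G θ ρ := by
    intro θ ρ
    rw [hG, hG, Odd.neg_pow hpodd, Even.neg_pow hqeven, Real.cos_pi_sub,
      Real.sin_pi_sub, neg_mul_neg]
    ring_nf
  refine ⟨key, fun θ hθ => ?_⟩
  have h1 : HasDerivAt (fun t : ℝ => π - t) (-1) θ := by
    exact (hasDerivAt_id' θ).const_sub π
  have h2 := ((hr (π - θ) hθ).comp θ h1).neg
  have h3 : G (π - θ) (r (π - θ)) = G θ (-r (π - θ)) := by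
    rw [← key θ (-r (π - θ)), neg_neg]
  rw [← h3]
  rw [show -(G (π - θ) (r (π - θ)) * -1) = G (π - θ) (r (π - θ)) by ring] at h2
  exact h2
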